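/- Let φ : [0,∞) → ℝ^{m×l} be continuous and bounded, and suppose t ↦ φ(t)^T is persistently exciting, i.e. there exist constants ε > 0, t₀ ≥ 0 and T₀ > 0 such that (1/T₀) ∫_t^{t+T₀} φ(s)^T φ(s) ds ⪰ ε I_l for all t ≥ t₀. Let e : [0,∞) → ℝ^l be continuously differentiable with e'(t) → 0 and φ(t)e(t) → 0 as t → ∞. Then e(t) → 0 as t → ∞. -/

import Mathlib

open Matrix Filter MeasureTheory

/-- Action of a real `k × l` matrix on a Euclidean vector. -/
noncomputable def mApply {k l : ℕ} (A : Matrix (Fin k) (Fin l) ℝ)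
    (x : EuclideanSpace ℝ (Fin l)) : EuclideanSpace ℝ (Fin k) :=
  (EuclideanSpace.equiv (Fin k) ℝ).symm (A.mulVec (EuclideanSpace.equiv (Fin l) ℝ x))

/-- Entrywise interval integral of a matrix-valued function. -/
noncomputable def matIntegral {k k' : ℕ} (f : ℝ → Matrix (Fin k) (Fin k') ℝ) (a b : ℝ) :
    Matrix (Fin k) (Fin k') ℝ :=
  Matrix.of fun i j => ∫ s in a..b, f s i j

lemma mApply_apply {k l : ℕ} (A : Matrix (Fin k) (Fin l) ℝ) (x : EuclideanSpace ℝ (Fin l))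
    (i : Fin k) : mApply A x i = A.mulVec (fun j => x j) i := rfl

lemma euclid_norm_sq {k : ℕ} (x : EuclideanSpace ℝ (Fin k)) :
    ‖x‖ ^ 2 = ∑ i, (x i) ^ 2 := by
  rw [EuclideanSpace.norm_eq, Real.sq_sqrt (by positivity)]
  simp [Real.norm_eq_abs, sq_abs]

lemma mApply_norm_sq {k l : ℕ} (A : Matrix (Fin k) (Fin l) ℝ) (x : EuclideanSpace ℝ (Fin l)) :
    ‖mApply A x‖ ^ 2 = ∑ i, (A.mulVec (fun j => x j) i) ^ 2 := by
  rw [euclid_norm_sq]; rfl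

lemma quad_eq_normsq {k l : ℕ} (A : Matrix (Fin k) (Fin l) ℝ) (x : EuclideanSpace ℝ (Fin l)) :
    (fun j => x j) ⬝ᵥ (Aᵀ * A) *ᵥ (fun j => x j) = ‖mApply A x‖ ^ 2 := by
  rw [mApply_norm_sq, ← Matrix.mulVec_mulVec, Matrix.dotProduct_mulVec, Matrix.vecMul_transpose]
  simp [dotProduct, sq]

lemma quad_matIntegral {k : ℕ} (g : ℝ → Matrix (Fin k) (Fin k) ℝ)
    (hg : ∀ i j, Continuous fun s => g s i j) (a b : ℝ) (x : Fin k → ℝ) :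
    x ⬝ᵥ (matIntegral g a b) *ᵥ x = ∫ s in a..b, x ⬝ᵥ (g s) *ᵥ x := by
  have h1 : (fun s => x ⬝ᵥ (g s) *ᵥ x) = fun s => ∑ i, ∑ j, x i * (g s i j * x j) := by
    funext s; simp [dotProduct, mulVec, Finset.mul_sum]
  rw [h1, intervalIntegral.integral_finset_sum]
  · have h2 : ∀ i : Fin k, (∫ s in a..b, ∑ j, x i * (g s i j * x j)) =
        ∑ j, x i * ((∫ s in a..b, g s i j) * x j) := by
      intro i
      rw [intervalIntegral.integral_finset_sum]
      · refine Finset.sum_congr rfl fun j _ => ?_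
        rw [intervalIntegral.integral_const_mul, intervalIntegral.integral_mul_const]
      · intro j _
        exact (continuous_const.mul ((hg i j).mul continuous_const)).intervalIntegrable a b
    simp only [h2]
    simp [matIntegral, dotProduct, mulVec, Finset.mul_sum]
  · intro i _
    apply Continuous.intervalIntegrable
    exact continuous_finset_sum _ fun j _ => continuous_const.mul ((hg i j).mul continuous_const)

lemma mApply_bound {k l : ℕ} {C : ℝ} (hC : 0 ≤ C) (A : Matrix (Fin k) (Fin l) ℝ)
    (hA : ∀ i j, |A i j| ≤ C) (x : EuclideanSpace ℝ (Fin l)) :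
    ‖mApply A x‖ ≤ Real.sqrt (k * l * C ^ 2) * ‖x‖ := by
  have hsq : ‖mApply A x‖ ^ 2 ≤ (k * l * C ^ 2) * ‖x‖ ^ 2 := by
    rw [mApply_norm_sq]
    have hrow : ∀ i, (A.mulVec (fun j => x j) i) ^ 2 ≤ (l * C ^ 2) * ‖x‖ ^ 2 := by
      intro i
      have := Finset.sum_mul_sq_le_sq_mul_sq Finset.univ (fun j => A i j) (fun j => x j)
      calc (A.mulVec (fun j => x j) i) ^ 2 = (∑ j, A i j * x j) ^ 2 := by simp [mulVec, dotProduct]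
        _ ≤ (∑ j : Fin l, (A i j) ^ 2) * ∑ j : Fin l, (x j) ^ 2 := this
        _ ≤ (l * C ^ 2) * ‖x‖ ^ 2 := by
            rw [euclid_norm_sq]
            apply mul_le_mul_of_nonneg_right _ (by positivity)
            calc (∑ j : Fin l, (A i j) ^ 2) ≤ ∑ _j : Fin l, C ^ 2 :=
                  Finset.sum_le_sum fun j _ => by
                    rw [← sq_abs]; exact pow_le_pow_left₀ (abs_nonneg _) (hA i j) 2
              _ = l * C ^ 2 := by simp [mul_comm]
    calc (∑ i, (A.mulVec (fun j => x j) i) ^ 2) ≤ ∑ _i : Fin k, (l * C ^ 2) * ‖x‖ ^ 2 :=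
          Finset.sum_le_sum fun i _ => hrow i
      _ = (k * l * C ^ 2) * ‖x‖ ^ 2 := by push_cast; ring_nf; simp [Finset.sum_const]; ring
  calc ‖mApply A x‖ = Real.sqrt (‖mApply A x‖ ^ 2) := (Real.sqrt_sq (norm_nonneg _)).symm
    _ ≤ Real.sqrt ((k * l * C ^ 2) * ‖x‖ ^ 2) := Real.sqrt_le_sqrt hsq
    _ = Real.sqrt (k * l * C ^ 2) * ‖x‖ := by
        rw [Real.sqrt_mul (by positivity), Real.sqrt_sq (norm_nonneg _)]

lemma mApply_sub {k l : ℕ} (A : Matrix (Fin k) (Fin l) ℝ) (x y : EuclideanSpace ℝ (Fin l)) :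
    mApply A x - mApply A y = mApply A (x - y) := by
  apply PiLp.ext; intro i
  have : (fun j => (x - y) j) = (fun j => x j) - (fun j => y j) := by
    funext j; simp
  simp only [PiLp.sub_apply, mApply_apply]
  rw [show (fun j => x j - y j) = (fun j => x j) - (fun j => y j) from rfl,
    Matrix.mulVec_sub, Pi.sub_apply]

lemma normsq_continuous {m l : ℕ} (φ : ℝ → Matrix (Fin m) (Fin l) ℝ)
    (hφc : ∀ i j, Continuous fun t => φ t i j) (x : EuclideanSpace ℝ (Fin l)) :
    Continuous fun s => ‖mApply (φ s) x‖ ^ 2 := by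
  have : (fun s => ‖mApply (φ s) x‖ ^ 2) =
      fun s => ∑ i, (∑ j, φ s i j * x j) ^ 2 := by
    funext s; rw [mApply_norm_sq]; simp [mulVec, dotProduct]
  rw [this]
  exact continuous_finset_sum _ fun i _ =>
    (continuous_finset_sum _ fun j _ => (hφc i j).mul continuous_const).pow 2

/-- A matrix-valued signal `f` is persistently exciting if
`(1/T₀) ∫_t^{t+T₀} f(s) f(s)ᵀ ds ⪰ ε I` for all `t ≥ t₀`. -/
def PersistentlyExciting {k k' : ℕ} (f : ℝ → Matrix (Fin k) (Fin k') ℝ) : Prop :=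
  ∃ ε : ℝ, 0 < ε ∧ ∃ t₀ : ℝ, 0 ≤ t₀ ∧ ∃ T₀ : ℝ, 0 < T₀ ∧ ∀ t, t₀ ≤ t →
    ((1 / T₀) • matIntegral (fun s => f s * (f s)ᵀ) t (t + T₀) -
      ε • (1 : Matrix (Fin k) (Fin k) ℝ)).PosSemidef

/-- let `φ : [0,∞) → ℝ^{m×l}` be continuous and bounded with `t ↦ φ(t)ᵀ`
persistently exciting, and let `e : [0,∞) → ℝ^l` be continuously differentiable with
`e'(t) → 0` and `φ(t)e(t) → 0` as `t → ∞`.  Then `e(t) → 0` as `t → ∞`. -/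
theorem stmt_10 (m l : ℕ) (φ : ℝ → Matrix (Fin m) (Fin l) ℝ)
    (hφc : ∀ i j, Continuous fun t => φ t i j)
    (hφb : ∃ C, ∀ t, 0 ≤ t → ∀ i j, |φ t i j| ≤ C)
    (hPE : PersistentlyExciting fun t => (φ t)ᵀ)
    (e e' : ℝ → EuclideanSpace ℝ (Fin l))
    (he : ∀ t, 0 ≤ t → HasDerivAt e (e' t) t)
    (he'c : ContinuousOn e' (Set.Ici (0 : ℝ)))
    (he'0 : Tendsto e' atTop (nhds 0))
    (hφe : Tendsto (fun t => mApply (φ t) (e t)) atTop (nhds 0)) :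
    Tendsto e atTop (nhds 0) := by
  obtain ⟨ε, hε, t₀, ht₀, T₀, hT₀, hPE⟩ := hPE
  obtain ⟨C₀, hC₀⟩ := hφb
  set C : ℝ := max C₀ 0 with hCdef
  have hC : 0 ≤ C := le_max_right _ _
  have hCb : ∀ t, 0 ≤ t → ∀ i j, |φ t i j| ≤ C := fun t ht i j =>
    (hC₀ t ht i j).trans (le_max_left _ _)
  set M : ℝ := Real.sqrt (m * l * C ^ 2) with hMdef
  have hM : 0 ≤ M := Real.sqrt_nonneg _
  have hden : (0:ℝ) < 1 + M * T₀ := by positivity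
  rw [NormedAddCommGroup.tendsto_nhds_zero]
  intro η hη
  set δ : ℝ := Real.sqrt ε * η / (2 * (1 + M * T₀)) with hδdef
  have hδ : 0 < δ := by
    apply div_pos (mul_pos (Real.sqrt_pos.2 hε) hη) (by positivity)
  have hB : δ * (1 + M * T₀) = Real.sqrt ε * η / 2 := by
    rw [hδdef, div_mul_eq_mul_div, div_eq_div_iff (mul_pos two_pos hden).ne' two_ne_zero]; ring
  obtain ⟨T₁, hT₁⟩ := (NormedAddCommGroup.tendsto_nhds_zero.1 he'0 δ hδ).exists_forall_of_atTop
  obtain ⟨T₂, hT₂⟩ := (NormedAddCommGroup.tendsto_nhds_zero.1 hφe δ hδ).exists_forall_of_atTop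
  set T : ℝ := max (max T₁ T₂) (max t₀ 0) with hTdef
  rw [eventually_atTop]
  refine ⟨T, fun t ht => ?_⟩
  have ht0 : (0:ℝ) ≤ t := le_trans ((le_max_right _ _).trans (le_max_right _ _)) ht
  have htt₀ : t₀ ≤ t := le_trans ((le_max_left _ _).trans (le_max_right _ _)) ht
  have htT₁ : T₁ ≤ t := le_trans ((le_max_left _ _).trans (le_max_left _ _)) ht
  have htT₂ : T₂ ≤ t := le_trans ((le_max_right _ _).trans (le_max_left _ _)) ht
  set x : Fin l → ℝ := fun j => e t j with hxdef
  set g : ℝ → Matrix (Fin l) (Fin l) ℝ := fun s => (φ s)ᵀ * φ s with hgdef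
  have hgc : ∀ i j, Continuous fun s => g s i j := by
    intro i j
    have : (fun s => g s i j) = fun s => ∑ r, φ s r i * φ s r j := by
      funext s; simp [hgdef, Matrix.mul_apply, Matrix.transpose_apply]
    rw [this]
    exact continuous_finset_sum _ fun r _ => (hφc r i).mul (hφc r j)
  -- PE inequality
  have hpsd := (hPE t htt₀).dotProduct_mulVec_nonneg x
  have hstar : star x = x := by funext j; simp
  rw [hstar] at hpsd
  have hTT : (fun s => ((φ s)ᵀ) * ((φ s)ᵀ)ᵀ) = g := by
    funext s; simp [hgdef]
  simp only [hTT] at hpsd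
  have hquad : x ⬝ᵥ (matIntegral g t (t + T₀)) *ᵥ x
      = ∫ s in t..(t + T₀), ‖mApply (φ s) (e t)‖ ^ 2 := by
    rw [quad_matIntegral g hgc]
    exact intervalIntegral.integral_congr fun s _ => quad_eq_normsq (φ s) (e t)
  have hxx : x ⬝ᵥ x = ‖e t‖ ^ 2 := by
    rw [euclid_norm_sq]; simp [dotProduct, sq]; rfl
  have hkey : ε * ‖e t‖ ^ 2 ≤ (1 / T₀) * ∫ s in t..(t + T₀), ‖mApply (φ s) (e t)‖ ^ 2 := by
    rw [← hquad, ← hxx]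
    have := hpsd
    simp only [Matrix.sub_mulVec, Matrix.smul_mulVec, dotProduct_sub,
      dotProduct_smul, Matrix.one_mulVec, smul_eq_mul] at this
    linarith
  -- pointwise bound on [t, t+T₀]
  set B : ℝ := δ * (1 + M * T₀) with hBdef
  have hptw : ∀ s ∈ Set.Icc t (t + T₀), ‖mApply (φ s) (e t)‖ ^ 2 ≤ B ^ 2 := by
    intro s hs
    have hs0 : (0:ℝ) ≤ s := le_trans ht0 hs.1
    have h1 : ‖mApply (φ s) (e s)‖ ≤ δ := le_of_lt (hT₂ s (le_trans htT₂ hs.1))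
    have h2 : ‖e t - e s‖ ≤ δ * T₀ := by
      have := Convex.norm_image_sub_le_of_norm_hasDerivWithin_le
        (f := e) (f' := e') (s := Set.Icc t (t + T₀)) (C := δ)
        (fun u hu => (he u (le_trans ht0 hu.1)).hasDerivWithinAt)
        (fun u hu => le_of_lt (hT₁ u (le_trans htT₁ hu.1)))
        (convex_Icc _ _) hs ⟨le_refl t, by linarith⟩
      calc ‖e t - e s‖ ≤ δ * ‖t - s‖ := this
        _ = δ * (s - t) := by
            rw [Real.norm_eq_abs, abs_sub_comm, abs_of_nonneg (by linarith [hs.1])]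
        _ ≤ δ * T₀ := by
            apply mul_le_mul_of_nonneg_left _ (le_of_lt hδ)
            linarith [hs.2]
    have h3 : ‖mApply (φ s) (e t - e s)‖ ≤ M * (δ * T₀) := by
      calc ‖mApply (φ s) (e t - e s)‖ ≤ M * ‖e t - e s‖ := by
            rw [hMdef]; exact mApply_bound hC (φ s) (hCb s hs0) _
        _ ≤ M * (δ * T₀) := mul_le_mul_of_nonneg_left h2 hM
    have h4 : ‖mApply (φ s) (e t)‖ ≤ B := by
      have hdec : mApply (φ s) (e t) = mApply (φ s) (e s) + mApply (φ s) (e t - e s) := by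
        rw [← mApply_sub]; abel
      calc ‖mApply (φ s) (e t)‖
          ≤ ‖mApply (φ s) (e s)‖ + ‖mApply (φ s) (e t - e s)‖ := by
            rw [hdec]; exact norm_add_le _ _
        _ ≤ δ + M * (δ * T₀) := add_le_add h1 h3
        _ = B := by rw [hBdef]; ring
    exact pow_le_pow_left₀ (norm_nonneg _) h4 2
  have hB0 : 0 ≤ B := by positivity
  have hint : (∫ s in t..(t + T₀), ‖mApply (φ s) (e t)‖ ^ 2) ≤ T₀ * B ^ 2 := by
    have h := intervalIntegral.integral_mono_on (by linarith : t ≤ t + T₀)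
      ((normsq_continuous φ hφc (e t)).intervalIntegrable t (t + T₀))
      (intervalIntegrable_const (μ := volume) (c := B ^ 2)) hptw
    calc (∫ s in t..(t + T₀), ‖mApply (φ s) (e t)‖ ^ 2)
        ≤ ∫ _s in t..(t + T₀), B ^ 2 := h
      _ = T₀ * B ^ 2 := by rw [intervalIntegral.integral_const]; simp [smul_eq_mul]
  have hfin : ε * ‖e t‖ ^ 2 ≤ B ^ 2 := by
    have : (1 / T₀) * (∫ s in t..(t + T₀), ‖mApply (φ s) (e t)‖ ^ 2) ≤ (1 / T₀) * (T₀ * B ^ 2) :=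
      mul_le_mul_of_nonneg_left hint (by positivity)
    have h2 : (1 / T₀) * (T₀ * B ^ 2) = B ^ 2 := by field_simp
    linarith [hkey]
  have hBsq : B ^ 2 = ε * (η / 2) ^ 2 := by
    rw [hB, div_pow, mul_pow, Real.sq_sqrt (le_of_lt hε)]
    ring
  have hnsq : ‖e t‖ ^ 2 ≤ (η / 2) ^ 2 := by
    rw [hBsq] at hfin
    nlinarith
  have : ‖e t‖ ≤ η / 2 := by
    calc ‖e t‖ = Real.sqrt (‖e t‖ ^ 2) := (Real.sqrt_sq (norm_nonneg _)).symm
      _ ≤ Real.sqrt ((η / 2) ^ 2) := Real.sqrt_le_sqrt hnsq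
      _ = η / 2 := Real.sqrt_sq (by linarith)
  linarith
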